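/- arXiv:1306.1825 — 2 statements merged into one kernel-verified Lean document; each statement's English description precedes it below -/
import Mathlib

section
/- With notation as above (orthonormal a_k, u_k, k = 1..r, all 2r vectors pairwise orthogonal), the product ∏_{k=1}^r (cos θ_k • 1 + sin θ_k • ι(a_k)ι(u_k)) has scalar part (projection to grade 0) equal to ∏_{k=1}^r cos θ_k. -/
open scoped RealInnerProductSpace

open CliffordAlgebra

section Aux

variable {V : Type*} [NormedAddCommGroup V] [InnerProductSpace ℝ V]
variable (Q : QuadraticForm ℝ V)

private lemma aux_B_eq (hQ : ∀ v, Q v = ‖v‖ ^ 2) {x y : V} (hxy : ⟪x, y⟫ = 0) :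
    QuadraticMap.associated (R := ℝ) (-Q) x y = 0 := by
  rw [QuadraticMap.associated_apply]
  simp only [QuadraticMap.neg_apply, hQ]
  rw [norm_add_sq_real, hxy]
  ring_nf
  simp

private lemma aux_contract (d : Module.Dual ℝ V) :
    ∀ l : List V, (∀ v ∈ l, d v = 0) →
      contractLeft (Q := (0 : QuadraticForm ℝ V)) d (l.map (ExteriorAlgebra.ι ℝ)).prod = 0
  | [], _ => by simpa using contractLeft_one (0 : QuadraticForm ℝ V) d
  | v :: l, h => by
    rw [List.map_cons, List.prod_cons, contractLeft_ι_mul,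
      aux_contract d l fun x hx => h x (List.mem_cons_of_mem _ hx),
      h v List.mem_cons_self, zero_smul, mul_zero, sub_zero]

private lemma aux_changeForm :
    ∀ l : List V,
      (l.Pairwise fun x y => QuadraticMap.associated (R := ℝ) (-Q) x y = 0) →
      changeForm (changeForm.associated_neg_proof (Q := Q)) (l.map (ι Q)).prod
        = (l.map (ExteriorAlgebra.ι ℝ)).prod
  | [], _ => by simp
  | v :: l, h => by
    rw [List.map_cons, List.prod_cons, changeForm_ι_mul,
      aux_changeForm l h.of_cons,
      aux_contract _ l (fun x hx => (List.pairwise_cons.mp h).1 x hx), sub_zero,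
      List.map_cons, List.prod_cons]

private lemma aux_mem : ∀ l : List V, (l.map (ExteriorAlgebra.ι ℝ)).prod ∈ ⋀[ℝ]^(l.length) V
  | [] => by
    simp only [List.map_nil, List.prod_nil, List.length_nil]
    exact SetLike.GradedOne.one_mem
  | v :: l => by
    rw [List.map_cons, List.prod_cons]
    have h1 : ExteriorAlgebra.ι ℝ v ∈ ⋀[ℝ]^1 V := by
      rw [show (⋀[ℝ]^1 V : Submodule ℝ (ExteriorAlgebra ℝ V))
          = LinearMap.range (ExteriorAlgebra.ι ℝ) from pow_one _]
      exact LinearMap.mem_range_self _ v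
    have := SetLike.GradedMul.mul_mem h1 (aux_mem l)
    rwa [add_comm] at this

private lemma aux_proj_zero {x : ExteriorAlgebra ℝ V} {n : ℕ} (hx : x ∈ ⋀[ℝ]^n V)
    (hn : n ≠ 0) :
    GradedAlgebra.proj (fun i : ℕ => ⋀[ℝ]^i V) 0 x = 0 := by
  rw [GradedAlgebra.proj_apply, DirectSum.decompose_of_mem_ne (ℳ := fun i : ℕ => ⋀[ℝ]^i V) hx hn]

private lemma aux_T_wedge_zero (hQ : ∀ v, Q v = ‖v‖ ^ 2) (w : List V)
    (hw : w.Pairwise fun x y => ⟪x, y⟫ = 0) (hne : w ≠ []) :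
    GradedAlgebra.proj (fun i : ℕ => ⋀[ℝ]^i V) 0
      (CliffordAlgebra.equivExterior Q ((w.map (ι Q)).prod)) = 0 := by
  have : CliffordAlgebra.equivExterior Q ((w.map (ι Q)).prod)
      = changeForm (changeForm.associated_neg_proof (Q := Q)) ((w.map (ι Q)).prod) := rfl
  rw [this, aux_changeForm Q w (hw.imp fun h => aux_B_eq Q hQ h)]
  exact aux_proj_zero (aux_mem w) (by simpa using hne)

private lemma aux_main (hQ : ∀ v, Q v = ‖v‖ ^ 2) :
    ∀ (r : ℕ) (a u : Fin r → V)
      (_ : ∀ i j : Fin r ⊕ Fin r, i ≠ j → ⟪Sum.elim a u i, Sum.elim a u j⟫ = 0)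
      (θ : Fin r → ℝ) (w : List V) (_ : w.Pairwise fun x y => ⟪x, y⟫ = 0)
      (_ : ∀ x ∈ w, ∀ i : Fin r ⊕ Fin r, ⟪x, Sum.elim a u i⟫ = 0),
      GradedAlgebra.proj (fun i : ℕ => ⋀[ℝ]^i V) 0 (CliffordAlgebra.equivExterior Q
        ((w.map (ι Q)).prod *
          (List.ofFn fun k => Real.cos (θ k) • (1 : CliffordAlgebra Q) +
            Real.sin (θ k) • (ι Q (a k) * ι Q (u k))).prod)) =
      (∏ k, Real.cos (θ k)) •
        GradedAlgebra.proj (fun i : ℕ => ⋀[ℝ]^i V) 0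
          (CliffordAlgebra.equivExterior Q ((w.map (ι Q)).prod))
  | 0 => by intro a u hau θ w hw hwa; simp
  | r + 1 => by
    intro a u hau θ w hw hwa
    have IH := aux_main hQ r (fun k => a k.succ) (fun k => u k.succ)
      (by
        intro i j hij
        rcases i with k | k <;> rcases j with l | l
        · exact hau (.inl k.succ) (.inl l.succ)
            (by simpa [Fin.succ_inj] using hij)
        · exact hau (.inl k.succ) (.inr l.succ) (by simp)
        · exact hau (.inr k.succ) (.inl l.succ) (by simp)
        · exact hau (.inr k.succ) (.inr l.succ)
            (by simpa [Fin.succ_inj] using hij))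
      (fun k => θ k.succ)
    have key : ∀ x ∈ w ++ [a 0, u 0], ∀ i : Fin (r + 1) ⊕ Fin (r + 1),
        (Sum.inl 0 : Fin (r + 1) ⊕ Fin (r + 1)) ≠ i →
        (Sum.inr 0 : Fin (r + 1) ⊕ Fin (r + 1)) ≠ i →
        ⟪x, Sum.elim a u i⟫ = 0 := by
      intro x hx i h1 h2
      rcases List.mem_append.mp hx with hx | hx
      · exact hwa x hx i
      · simp only [List.mem_cons, List.mem_singleton, List.not_mem_nil, or_false] at hx
        rcases hx with rfl | rfl
        · exact hau (.inl 0) i h1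
        · exact hau (.inr 0) i h2
    have hpair2 : (w ++ [a 0, u 0]).Pairwise fun x y => ⟪x, y⟫ = 0 := by
      rw [List.pairwise_append]
      refine ⟨hw, ?_, ?_⟩
      · refine List.Pairwise.cons ?_ (List.pairwise_singleton _ _)
        intro y hy
        have hy' : y = u 0 := by simpa using hy
        subst hy'
        exact hau (.inl 0) (.inr 0) (by simp)
      · intro x hx y hy
        simp only [List.mem_cons, List.not_mem_nil, or_false] at hy
        rcases hy with rfl | rfl
        · exact hwa x hx (.inl 0)
        · exact hwa x hx (.inr 0)
    rw [List.ofFn_succ, List.prod_cons]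
    have hexp : (w.map (ι Q)).prod *
        ((Real.cos (θ 0) • (1 : CliffordAlgebra Q) +
            Real.sin (θ 0) • (ι Q (a 0) * ι Q (u 0))) *
          (List.ofFn fun k : Fin r => Real.cos (θ k.succ) • (1 : CliffordAlgebra Q) +
            Real.sin (θ k.succ) • (ι Q (a k.succ) * ι Q (u k.succ))).prod)
      = Real.cos (θ 0) • ((w.map (ι Q)).prod *
          (List.ofFn fun k : Fin r => Real.cos (θ k.succ) • (1 : CliffordAlgebra Q) +
            Real.sin (θ k.succ) • (ι Q (a k.succ) * ι Q (u k.succ))).prod)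
        + Real.sin (θ 0) • (((w ++ [a 0, u 0]).map (ι Q)).prod *
          (List.ofFn fun k : Fin r => Real.cos (θ k.succ) • (1 : CliffordAlgebra Q) +
            Real.sin (θ k.succ) • (ι Q (a k.succ) * ι Q (u k.succ))).prod) := by
      simp only [List.map_append, List.prod_append, List.map_cons, List.prod_cons,
        List.map_nil, List.prod_nil, mul_one, add_mul, mul_add, smul_mul_assoc,
        mul_smul_comm, one_mul, mul_assoc]
    rw [hexp, map_add, map_add, map_smul, map_smul, map_smul, map_smul]
    rw [IH w hw (fun x hx i => by
      rcases i with k | k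
      · exact hwa x hx (.inl k.succ)
      · exact hwa x hx (.inr k.succ))]
    rw [IH (w ++ [a 0, u 0])
      hpair2
      (fun x hx i => by
        rcases i with k | k
        · exact key x hx (.inl k.succ) (by simp [(Fin.succ_ne_zero k).symm])
            (by simp)
        · exact key x hx (.inr k.succ) (by simp)
            (by simp [(Fin.succ_ne_zero k).symm]))]
    rw [aux_T_wedge_zero Q hQ (w ++ [a 0, u 0])
      hpair2
      (by simp)]
    rw [smul_zero, smul_zero, add_zero, smul_smul, Fin.prod_univ_succ, mul_smul]

end Aux

/-- With `{a₁,u₁,…,a_r,u_r}` an orthonormal family of `2r` vectors, the ordered product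
`∏ k (cos θ_k • 1 + sin θ_k • ι a_k ι u_k)` has scalar part (grade-0 projection, computed
via the canonical linear isomorphism with the graded exterior algebra) equal to
`∏ k cos θ_k`. -/
theorem stmt15 {V : Type*} [NormedAddCommGroup V] [InnerProductSpace ℝ V]
    (Q : QuadraticForm ℝ V) (hQ : ∀ v, Q v = ‖v‖ ^ 2)
    (r : ℕ) (a u : Fin r → V) (horth : Orthonormal ℝ (Sum.elim a u)) (θ : Fin r → ℝ) :
    GradedAlgebra.proj (fun i : ℕ => ⋀[ℝ]^i V) 0
      (CliffordAlgebra.equivExterior Q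
        ((List.ofFn fun k => Real.cos (θ k) • (1 : CliffordAlgebra Q) +
            Real.sin (θ k) • (CliffordAlgebra.ι Q (a k) * CliffordAlgebra.ι Q (u k))).prod)) =
    algebraMap ℝ (ExteriorAlgebra ℝ V) (∏ k, Real.cos (θ k)) := by
  have := aux_main Q hQ r a u (fun i j hij => horth.2 hij) θ [] (by simp) (by simp)
  simp only [List.map_nil, List.prod_nil, one_mul] at this
  rw [this]
  have h1 : CliffordAlgebra.equivExterior Q (1 : CliffordAlgebra Q) = 1 := by
    have : CliffordAlgebra.equivExterior Q (1 : CliffordAlgebra Q)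
        = CliffordAlgebra.changeForm
            (CliffordAlgebra.changeForm.associated_neg_proof (Q := Q)) 1 := rfl
    rw [this, CliffordAlgebra.changeForm_one]
  rw [h1, GradedAlgebra.proj_apply,
    DirectSum.decompose_of_mem_same (ℳ := fun i : ℕ => ⋀[ℝ]^i V)
      (SetLike.GradedOne.one_mem : (1 : ExteriorAlgebra ℝ V) ∈ ⋀[ℝ]^0 V),
    Algebra.algebraMap_eq_smul_one]
end

section
/- With {a₁,u₁,...,a_r,u_r} orthonormal, the product ∏_{k=1}^r (cos θ_k • 1 + sin θ_k • ι(a_k)ι(u_k)) has top-grade (grade 2r) component equal to (∏_{k=1}^r sin θ_k) • ι(a₁)ι(u₁)⋯ι(a_r)ι(u_r). -/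
open scoped RealInnerProductSpace

section Aux

variable {V : Type*} [AddCommGroup V] [Module ℝ V]

open CliffordAlgebra

/-- the factor `c • 1 + s • ι a * ι u` for a tuple `(c, s, a, u)` -/
private def fac (Q : QuadraticForm ℝ V) (p : ℝ × ℝ × V × V) : CliffordAlgebra Q :=
  p.1 • (1 : CliffordAlgebra Q) + p.2.1 • (ι Q p.2.2.1 * ι Q p.2.2.2)

private def wedgeFac (Q : QuadraticForm ℝ V) (p : ℝ × ℝ × V × V) : CliffordAlgebra Q :=
  ι Q p.2.2.1 * ι Q p.2.2.2

/-- a contraction by a dual vanishing on all vectors kills the product of factors -/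
private lemma contract_fac_prod (Q : QuadraticForm ℝ V) (d : Module.Dual ℝ V)
    (l : List (ℝ × ℝ × V × V)) (hd : ∀ p ∈ l, d p.2.2.1 = 0 ∧ d p.2.2.2 = 0) :
    contractLeft d ((l.map (fac Q)).prod) = 0 := by
  induction l with
  | nil => simpa using contractLeft_one Q d
  | cons p t ih =>
    obtain ⟨ha, hu⟩ := hd p (List.mem_cons_self)
    have ih' := ih fun q hq => hd q (List.mem_cons_of_mem _ hq)
    rw [List.map_cons, List.prod_cons]
    set T := (t.map (fac Q)).prod with hT
    have hexp : fac Q p * T = p.1 • T + p.2.1 • (ι Q p.2.2.1 * (ι Q p.2.2.2 * T)) := by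
      simp [fac, add_mul, smul_mul_assoc, mul_assoc]
    rw [hexp, map_add, map_smul, map_smul, ih', contractLeft_ι_mul, contractLeft_ι_mul, ih',
      ha, hu]
    simp

private lemma contract_mul_fac_prod (Q : QuadraticForm ℝ V) (d : Module.Dual ℝ V) (v : V)
    (l : List (ℝ × ℝ × V × V)) (hv : d v = 0)
    (hd : ∀ p ∈ l, d p.2.2.1 = 0 ∧ d p.2.2.2 = 0) :
    contractLeft d (ι Q v * (l.map (fac Q)).prod) = 0 := by
  rw [contractLeft_ι_mul, contract_fac_prod Q d l hd, hv]
  simp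

private lemma changeForm_fac_prod {Q Q' : QuadraticForm ℝ V}
    {B : LinearMap.BilinForm ℝ V} (h : B.toQuadraticMap = Q' - Q)
    (l : List (ℝ × ℝ × V × V))
    (hpair : l.Pairwise fun p q =>
      B p.2.2.1 q.2.2.1 = 0 ∧ B p.2.2.1 q.2.2.2 = 0 ∧
      B p.2.2.2 q.2.2.1 = 0 ∧ B p.2.2.2 q.2.2.2 = 0)
    (hself : ∀ p ∈ l, B p.2.2.1 p.2.2.2 = 0) :
    changeForm h ((l.map (fac Q)).prod) = (l.map (fac Q')).prod := by
  induction l with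
  | nil => simpa using changeForm_one h
  | cons p t ih =>
    rw [List.pairwise_cons] at hpair
    obtain ⟨hhead, hpt⟩ := hpair
    have ih' := ih hpt fun q hq => hself q (List.mem_cons_of_mem _ hq)
    have hda : ∀ q ∈ t, (B p.2.2.1) q.2.2.1 = 0 ∧ (B p.2.2.1) q.2.2.2 = 0 :=
      fun q hq => ⟨(hhead q hq).1, (hhead q hq).2.1⟩
    have hdu : ∀ q ∈ t, (B p.2.2.2) q.2.2.1 = 0 ∧ (B p.2.2.2) q.2.2.2 = 0 :=
      fun q hq => ⟨(hhead q hq).2.2.1, (hhead q hq).2.2.2⟩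
    rw [List.map_cons, List.prod_cons, List.map_cons, List.prod_cons]
    set T := (t.map (fac Q)).prod with hT
    set T' := (t.map (fac Q')).prod with hT'
    have hexp : fac Q p * T = p.1 • T + p.2.1 • (ι Q p.2.2.1 * (ι Q p.2.2.2 * T)) := by
      simp [fac, add_mul, smul_mul_assoc, mul_assoc]
    have h2 : changeForm h (ι Q p.2.2.2 * T) = ι Q' p.2.2.2 * T' := by
      rw [changeForm_ι_mul, ih', contract_fac_prod Q' (B p.2.2.2) t hdu, sub_zero]
    have h3 : changeForm h (ι Q p.2.2.1 * (ι Q p.2.2.2 * T)) =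
        ι Q' p.2.2.1 * (ι Q' p.2.2.2 * T') := by
      rw [changeForm_ι_mul, h2,
        contract_mul_fac_prod Q' (B p.2.2.1) p.2.2.2 t (hself p (List.mem_cons_self)) hda,
        sub_zero]
    rw [hexp, map_add, map_smul, map_smul, ih', h3]
    simp [fac, add_mul, smul_mul_assoc, mul_assoc]

private lemma wedge_prod_mem (l : List (ℝ × ℝ × V × V)) :
    ((l.map (wedgeFac (0 : QuadraticForm ℝ V))).prod) ∈ ⋀[ℝ]^(2 * l.length) V := by
  induction l with
  | nil => simpa using SetLike.GradedOne.one_mem (A := fun i : ℕ => ⋀[ℝ]^i V)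
  | cons p t ih =>
    have h1 : ∀ v : V, ι (0 : QuadraticForm ℝ V) v ∈ ⋀[ℝ]^1 V := by
      intro v
      show _ ∈ LinearMap.range (ExteriorAlgebra.ι ℝ (M := V)) ^ 1
      rw [pow_one]
      exact LinearMap.mem_range_self _ v
    have := SetLike.mul_mem_graded (A := fun i : ℕ => ⋀[ℝ]^i V) (h1 p.2.2.1)
      (SetLike.mul_mem_graded (A := fun i : ℕ => ⋀[ℝ]^i V) (h1 p.2.2.2) ih)
    have harith : 1 + (1 + 2 * t.length) = 2 * (p :: t).length := by
      simp only [List.length_cons]; ring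
    rw [harith] at this
    rw [List.map_cons, List.prod_cons]
    simpa [wedgeFac, mul_assoc] using this

/-- the span of the low grades -/
private def lowGrades (n : ℕ) : Submodule ℝ (ExteriorAlgebra ℝ V) :=
  ⨆ i ∈ Finset.range n, ⋀[ℝ]^i V

private lemma lowGrades_mono {n m : ℕ} (h : n ≤ m) :
    (lowGrades n : Submodule ℝ (ExteriorAlgebra ℝ V)) ≤ lowGrades m := by
  refine iSup₂_le fun i hi => le_iSup₂ (f := fun i (_ : i ∈ Finset.range m) => ⋀[ℝ]^i V) i ?_
  rw [Finset.mem_range] at hi ⊢; omega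

private lemma mem_lowGrades_of_mem {i n : ℕ} (hin : i < n) {x : ExteriorAlgebra ℝ V}
    (hx : x ∈ ⋀[ℝ]^i V) : x ∈ (lowGrades n : Submodule ℝ (ExteriorAlgebra ℝ V)) :=
  le_iSup₂ (f := fun i (_ : i ∈ Finset.range n) => ⋀[ℝ]^i V) i (Finset.mem_range.mpr hin) hx

private lemma mul_lowGrades {n : ℕ} {w y : ExteriorAlgebra ℝ V}
    (hw : w ∈ ⋀[ℝ]^2 V) (hy : y ∈ (lowGrades n : Submodule ℝ (ExteriorAlgebra ℝ V))) :
    w * y ∈ (lowGrades (n + 2) : Submodule ℝ (ExteriorAlgebra ℝ V)) := by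
  have hle : (lowGrades n : Submodule ℝ (ExteriorAlgebra ℝ V)) ≤
      (lowGrades (n + 2)).comap (LinearMap.mulLeft ℝ w) := by
    refine iSup₂_le fun i hi => fun x hx => ?_
    rw [Finset.mem_range] at hi
    rw [Submodule.mem_comap]
    have hm2 : w * x ∈ ⋀[ℝ]^(2 + i) V :=
      SetLike.mul_mem_graded (A := fun i : ℕ => ⋀[ℝ]^i V) hw hx
    exact mem_lowGrades_of_mem (by omega) hm2
  exact hle hy

private lemma fac_prod_decomp (l : List (ℝ × ℝ × V × V)) :
    (l.map (fac (0 : QuadraticForm ℝ V))).prod -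
      ((l.map fun p => p.2.1).prod) • (l.map (wedgeFac (0 : QuadraticForm ℝ V))).prod ∈
      (lowGrades (2 * l.length) : Submodule ℝ (ExteriorAlgebra ℝ V)) := by
  induction l with
  | nil => simp
  | cons p t ih =>
    set T := (t.map (fac (0 : QuadraticForm ℝ V))).prod with hT
    set W := (t.map (wedgeFac (0 : QuadraticForm ℝ V))).prod with hW
    set s := ((t.map fun p => p.2.1).prod) with hs
    have key : (((p :: t).map (fac (0 : QuadraticForm ℝ V))).prod) -
        (((p :: t).map fun p => p.2.1).prod) •
          (((p :: t).map (wedgeFac (0 : QuadraticForm ℝ V))).prod) =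
        p.1 • T + p.2.1 • (wedgeFac 0 p * (T - s • W)) := by
      simp only [List.map_cons, List.prod_cons, fac, wedgeFac, ← hT, ← hW, ← hs]
      simp only [add_mul, smul_mul_assoc, one_mul, mul_smul_comm, mul_sub, smul_sub]
      module
    rw [key]
    have hWmem : W ∈ ⋀[ℝ]^(2 * t.length) V := wedge_prod_mem t
    have hwp : wedgeFac (0 : QuadraticForm ℝ V) p ∈ ⋀[ℝ]^2 V := by
      have := wedge_prod_mem (V := V) [p]
      simpa using this
    have hTmem : T ∈ (lowGrades (2 * (p :: t).length) : Submodule ℝ (ExteriorAlgebra ℝ V)) := by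
      have : T = (T - s • W) + s • W := by abel
      rw [this]
      refine Submodule.add_mem _ (lowGrades_mono (by simp only [List.length_cons]; omega) ih) ?_
      exact Submodule.smul_mem _ _
        (mem_lowGrades_of_mem (by simp only [List.length_cons]; omega) hWmem)
    refine Submodule.add_mem _ (Submodule.smul_mem _ _ hTmem) (Submodule.smul_mem _ _ ?_)
    have : 2 * (p :: t).length = 2 * t.length + 2 := by simp only [List.length_cons]; ring
    rw [this]
    exact mul_lowGrades hwp ih

private lemma proj_lowGrades {n : ℕ} {x : ExteriorAlgebra ℝ V}
    (hx : x ∈ (lowGrades n : Submodule ℝ (ExteriorAlgebra ℝ V))) {m : ℕ} (hm : n ≤ m) :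
    GradedAlgebra.proj (fun i : ℕ => ⋀[ℝ]^i V) m x = 0 := by
  have hle : (lowGrades n : Submodule ℝ (ExteriorAlgebra ℝ V)) ≤
      LinearMap.ker (GradedAlgebra.proj (fun i : ℕ => ⋀[ℝ]^i V) m) := by
    refine iSup₂_le fun i hi => fun y hy => ?_
    rw [Finset.mem_range] at hi
    rw [LinearMap.mem_ker, GradedAlgebra.proj_apply,
      DirectSum.decompose_of_mem_ne (fun i : ℕ => ⋀[ℝ]^i V) hy (by omega)]
  exact hle hx

end Aux

/-- With `{a₁,u₁,…,a_r,u_r}` an orthonormal family of `2r` vectors, the ordered product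
`∏ k (cos θ_k • 1 + sin θ_k • ι a_k ι u_k)` has top-grade (grade `2r`) component
(computed via the canonical linear grade decomposition through the exterior algebra)
equal to `(∏ k sin θ_k) • ι a₁ ι u₁ ⋯ ι a_r ι u_r`. -/
theorem stmt16 {V : Type*} [NormedAddCommGroup V] [InnerProductSpace ℝ V]
    (Q : QuadraticForm ℝ V) (hQ : ∀ v, Q v = ‖v‖ ^ 2)
    (r : ℕ) (a u : Fin r → V) (horth : Orthonormal ℝ (Sum.elim a u)) (θ : Fin r → ℝ) :
    GradedAlgebra.proj (fun i : ℕ => ⋀[ℝ]^i V) (2 * r)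
      (CliffordAlgebra.equivExterior Q
        ((List.ofFn fun k => Real.cos (θ k) • (1 : CliffordAlgebra Q) +
            Real.sin (θ k) • (CliffordAlgebra.ι Q (a k) * CliffordAlgebra.ι Q (u k))).prod)) =
    (∏ k, Real.sin (θ k)) • CliffordAlgebra.equivExterior Q
      ((List.ofFn fun k => CliffordAlgebra.ι Q (a k) * CliffordAlgebra.ι Q (u k)).prod) := by
  classical
  set B : LinearMap.BilinForm ℝ V := QuadraticMap.associated (R := ℝ) (-Q) with hBdef
  -- B vanishes on orthogonal pairs
  have hB0 : ∀ v w : V, ⟪v, w⟫ = 0 → B v w = 0 := by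
    intro v w hvw
    have hpol : (-Q) (v + w) - (-Q) v - (-Q) w = 0 := by
      simp only [QuadraticMap.neg_apply, hQ]
      rw [@norm_add_sq_real, hvw]
      ring
    rw [hBdef]
    show QuadraticMap.associatedHom ℝ (-Q) v w = 0
    rw [QuadraticMap.associated_apply, hpol, smul_zero]
  have hinner : ∀ i j : Fin r ⊕ Fin r, i ≠ j → ⟪Sum.elim a u i, Sum.elim a u j⟫ = 0 := horth.2
  have hau : ∀ i j : Fin r, ⟪a i, u j⟫ = 0 := fun i j =>
    hinner (Sum.inl i) (Sum.inr j) (by simp)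
  have hua : ∀ i j : Fin r, ⟪u i, a j⟫ = 0 := fun i j =>
    hinner (Sum.inr i) (Sum.inl j) (by simp)
  have haa : ∀ i j : Fin r, i ≠ j → ⟪a i, a j⟫ = 0 := fun i j hij =>
    hinner (Sum.inl i) (Sum.inl j) (by simpa)
  have huu : ∀ i j : Fin r, i ≠ j → ⟪u i, u j⟫ = 0 := fun i j hij =>
    hinner (Sum.inr i) (Sum.inr j) (by simpa)
  have hchange : CliffordAlgebra.equivExterior Q =
      CliffordAlgebra.changeFormEquiv
        (CliffordAlgebra.changeForm.associated_neg_proof (Q := Q)) := rfl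
  -- generic product lemma applied to two lists
  have main : ∀ c s : Fin r → ℝ,
      CliffordAlgebra.equivExterior Q
        ((List.ofFn fun k => c k • (1 : CliffordAlgebra Q) +
            s k • (CliffordAlgebra.ι Q (a k) * CliffordAlgebra.ι Q (u k))).prod) =
      ((List.ofFn fun k => (c k, s k, a k, u k)).map
        (fac (0 : QuadraticForm ℝ V))).prod := by
    intro c s
    have heq : (List.ofFn fun k => c k • (1 : CliffordAlgebra Q) +
        s k • (CliffordAlgebra.ι Q (a k) * CliffordAlgebra.ι Q (u k))) =
        (List.ofFn fun k => (c k, s k, a k, u k)).map (fac Q) := by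
      rw [List.map_ofFn]
      rfl
    rw [heq, hchange, CliffordAlgebra.changeFormEquiv_apply]
    refine changeForm_fac_prod _ _ ?_ ?_
    · rw [List.pairwise_ofFn]
      intro i j hij
      exact ⟨hB0 _ _ (haa i j (Fin.ne_of_lt hij)), hB0 _ _ (hau i j),
        hB0 _ _ (hua i j), hB0 _ _ (huu i j (Fin.ne_of_lt hij))⟩
    · intro p hp
      rw [List.mem_ofFn] at hp
      obtain ⟨k, rfl⟩ := hp
      exact hB0 _ _ (hau k k)
  -- right-hand side
  have hrhs : CliffordAlgebra.equivExterior Q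
      ((List.ofFn fun k => CliffordAlgebra.ι Q (a k) * CliffordAlgebra.ι Q (u k)).prod) =
      ((List.ofFn fun k => ((0 : ℝ), (1 : ℝ), a k, u k)).map
        (wedgeFac (0 : QuadraticForm ℝ V))).prod := by
    have h1 : (List.ofFn fun k => CliffordAlgebra.ι Q (a k) * CliffordAlgebra.ι Q (u k)) =
        (List.ofFn fun k => (0 : ℝ) • (1 : CliffordAlgebra Q) +
          (1 : ℝ) • (CliffordAlgebra.ι Q (a k) * CliffordAlgebra.ι Q (u k))) := by
      simp
    rw [h1, main (fun _ => 0) (fun _ => 1)]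
    congr 1
    rw [List.map_ofFn, List.map_ofFn]
    congr 1
    funext k
    simp [Function.comp, fac, wedgeFac]
  set l : List (ℝ × ℝ × V × V) := List.ofFn fun k => (Real.cos (θ k), Real.sin (θ k), a k, u k)
    with hl
  have hlen : l.length = r := by simp [hl]
  have hWeq : (l.map (wedgeFac (0 : QuadraticForm ℝ V))).prod =
      ((List.ofFn fun k => ((0 : ℝ), (1 : ℝ), a k, u k)).map
        (wedgeFac (0 : QuadraticForm ℝ V))).prod := by
    rw [hl, List.map_ofFn, List.map_ofFn]
    rfl
  have hs : (l.map fun p => p.2.1).prod = ∏ k, Real.sin (θ k) := by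
    rw [hl, List.map_ofFn, List.prod_ofFn]
    rfl
  rw [main (fun k => Real.cos (θ k)) (fun k => Real.sin (θ k)), hrhs]
  have hdecomp := fac_prod_decomp (V := V) l
  set P := (l.map (fac (0 : QuadraticForm ℝ V))).prod with hP
  set W := (l.map (wedgeFac (0 : QuadraticForm ℝ V))).prod with hW
  have hPW : P = ((l.map fun p => p.2.1).prod) • W + (P - ((l.map fun p => p.2.1).prod) • W) := by
    abel
  rw [← hl, ← hP] at *
  rw [hPW, map_add, map_smul]
  rw [proj_lowGrades hdecomp (by rw [hlen])]
  have hWmem : W ∈ ⋀[ℝ]^(2 * r) V := by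
    have := wedge_prod_mem (V := V) l
    rwa [hlen] at this
  have hprojW : GradedAlgebra.proj (fun i : ℕ => ⋀[ℝ]^i V) (2 * r) W = W := by
    rw [GradedAlgebra.proj_apply, DirectSum.decompose_of_mem_same (fun i : ℕ => ⋀[ℝ]^i V) hWmem]
  rw [hprojW, hs, ← hWeq]
  simp
end
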